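/- Suppose Assumption (S1) holds with some q ≥ 1 and 0 < α ≤ 1, and the kernel assumption holds. Then there is a constant C > 0 such that for all n ∈ ℕ, all b ∈ (0,1) with nb ≥ 1, and all u ∈ [0,1]: | (1/n) Σ_{t=1}^n K_b(t/n − u) (E X_{t,n} − E X̃_t(t/n)) | ≤ C n^{−α}, and | (1/n) Σ_{t=1}^n K_b(t/n − u) (E X̃_t(t/n) − E X̃_0(u)) | ≤ C (b^α + n^{−1}). -/

import Mathlib

open MeasureTheory Filter Set

noncomputable section

/-- The two-sided shift on `ℤ → ℝ`. -/
def shiftZ : (ℤ → ℝ) → (ℤ → ℝ) := fun x t => x (t + 1)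

/-- Stationarity and ergodicity of a real-valued process indexed by `ℤ`. -/
def StatErg {Ω : Type*} [MeasurableSpace Ω] (μ : Measure Ω) (X : ℤ → Ω → ℝ) : Prop :=
  Ergodic shiftZ (Measure.map (fun ω t => X t ω) μ)

/-- The localizing-kernel assumption. -/
structure KernelAssumption (K : ℝ → ℝ) (Kinf BK : ℝ) : Prop where
  pos : 0 < Kinf
  bound : ∀ x, |K x| ≤ Kinf
  bv : eVariationOn K Set.univ ≤ ENNReal.ofReal BK
  supp : Function.support K ⊆ Set.Icc (-(1/2) : ℝ) (1/2)
  int_one : (∫ x, K x) = 1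

lemma shiftZ_iterate (k : ℕ) (x : ℤ → ℝ) (s : ℤ) : shiftZ^[k] x s = x (s + k) := by
  induction k generalizing x s with
  | zero => simp
  | succ k ih =>
    rw [Function.iterate_succ_apply, ih, shiftZ]
    push_cast
    ring_nf

section helpers

variable {Ω : Type*} [MeasurableSpace Ω] {μ : Measure Ω} [IsProbabilityMeasure μ]

/-- Transfer from `L^q` to `L^1` on a probability space. -/
lemma integrable_of_Lq {W : Ω → ℝ} (hW : AEStronglyMeasurable W μ) {q M : ℝ} (hq : 1 ≤ q)
    (h : eLpNorm W (ENNReal.ofReal q) μ ≤ ENNReal.ofReal M) : Integrable W μ := by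
  have h1q : (1 : ENNReal) ≤ ENNReal.ofReal q := by
    rw [show (1 : ENNReal) = ENNReal.ofReal 1 by simp]
    exact ENNReal.ofReal_le_ofReal hq
  have h1 : eLpNorm W 1 μ ≤ ENNReal.ofReal M :=
    (eLpNorm_le_eLpNorm_of_exponent_le h1q hW).trans h
  have : MemLp W 1 μ := ⟨hW, lt_of_le_of_lt h1 ENNReal.ofReal_lt_top⟩
  exact memLp_one_iff_integrable.mp this

lemma abs_integral_le_of_Lq {W : Ω → ℝ} (hW : AEStronglyMeasurable W μ) {q M : ℝ} (hq : 1 ≤ q)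
    (hM : 0 ≤ M)
    (h : eLpNorm W (ENNReal.ofReal q) μ ≤ ENNReal.ofReal M) : |∫ ω, W ω ∂μ| ≤ M := by
  have h1q : (1 : ENNReal) ≤ ENNReal.ofReal q := by
    rw [show (1 : ENNReal) = ENNReal.ofReal 1 by simp]
    exact ENNReal.ofReal_le_ofReal hq
  have h1 : eLpNorm W 1 μ ≤ ENNReal.ofReal M :=
    (eLpNorm_le_eLpNorm_of_exponent_le h1q hW).trans h
  calc |∫ ω, W ω ∂μ| = ‖∫ ω, W ω ∂μ‖ := (Real.norm_eq_abs _).symm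
    _ ≤ ∫ ω, ‖W ω‖ ∂μ := norm_integral_le_integral_norm W
    _ = (∫⁻ ω, ‖W ω‖₊ ∂μ).toReal := integral_norm_eq_lintegral_enorm hW
    _ ≤ M := by
        apply ENNReal.toReal_le_of_le_ofReal hM
        rwa [eLpNorm_one_eq_lintegral_enorm] at h1

/-- Stationarity transfers integrals and `L^p` norms between times. -/
lemma stationary_transfer (Y : ℤ → Ω → ℝ) (hY : ∀ t, Measurable (Y t))
    (hse : StatErg μ Y) (k : ℕ) (p : ENNReal) :
    (∫ ω, Y (k : ℤ) ω ∂μ = ∫ ω, Y 0 ω ∂μ) ∧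
      eLpNorm (Y (k : ℤ)) p μ = eLpNorm (Y 0) p μ := by
  set φ : Ω → (ℤ → ℝ) := fun ω t => Y t ω with hφdef
  have hφ : Measurable φ := measurable_pi_lambda _ fun t => hY t
  set ν : Measure (ℤ → ℝ) := Measure.map φ μ with hν
  have hmp : MeasurePreserving shiftZ ν ν := hse.toMeasurePreserving
  have hmpk : MeasurePreserving shiftZ^[k] ν ν := hmp.iterate k
  have hev : ∀ s : ℤ, Measurable (fun x : ℤ → ℝ => x s) := fun s => measurable_pi_apply s
  have hiter : Measurable (shiftZ^[k]) := hmpk.measurable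
  have key : ∀ s : ℤ, (fun x : ℤ → ℝ => x (s + k)) = (fun x : ℤ → ℝ => x s) ∘ shiftZ^[k] := by
    intro s; funext x; simp [Function.comp, shiftZ_iterate]
  -- integral part
  have hint : ∀ s : ℤ, ∫ ω, Y s ω ∂μ = ∫ x, x s ∂ν := by
    intro s
    rw [hν, integral_map hφ.aemeasurable (hev s).aestronglyMeasurable]
  have hintν : ∫ x, x (k : ℤ) ∂ν = ∫ x, x (0 : ℤ) ∂ν := by
    have : (fun x : ℤ → ℝ => x (k : ℤ)) = (fun x : ℤ → ℝ => x (0 : ℤ)) ∘ shiftZ^[k] := by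
      have := key 0; simpa using this
    rw [this]
    calc ∫ x, ((fun y : ℤ → ℝ => y (0:ℤ)) ∘ shiftZ^[k]) x ∂ν
        = ∫ y, y (0:ℤ) ∂(Measure.map shiftZ^[k] ν) := by
          rw [integral_map hiter.aemeasurable]
          · rfl
          · rw [hmpk.map_eq]; exact (hev 0).aestronglyMeasurable
      _ = ∫ y, y (0:ℤ) ∂ν := by rw [hmpk.map_eq]
  -- eLpNorm part
  have help : ∀ s : ℤ, eLpNorm (Y s) p μ = eLpNorm (fun x : ℤ → ℝ => x s) p ν := by
    intro s
    rw [hν, eLpNorm_map_measure (hev s).aestronglyMeasurable hφ.aemeasurable]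
    rfl
  have helpν : eLpNorm (fun x : ℤ → ℝ => x (k : ℤ)) p ν
      = eLpNorm (fun x : ℤ → ℝ => x (0 : ℤ)) p ν := by
    have h0 : (fun x : ℤ → ℝ => x (k : ℤ)) = (fun x : ℤ → ℝ => x (0 : ℤ)) ∘ shiftZ^[k] := by
      have := key 0; simpa using this
    have hg : AEStronglyMeasurable (fun x : ℤ → ℝ => x (0 : ℤ))
        (Measure.map shiftZ^[k] ν) := by
      rw [hmpk.map_eq]; exact (hev 0).aestronglyMeasurable
    have h2 := eLpNorm_map_measure (p := p) hg hiter.aemeasurable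
    rw [hmpk.map_eq] at h2
    rw [h0, ← h2]
  exact ⟨by rw [hint, hintν, ← hint], by rw [help, helpν, ← help]⟩

/-- Generic bound for localized kernel sums with pointwise-bounded coefficients. -/
lemma sum_kernel_bound (n : ℕ) (hn : 1 ≤ n) {b u : ℝ} (hb : 0 < b)
    (hnb : 1 ≤ (n : ℝ) * b) (hu : 0 ≤ u)
    (K : ℝ → ℝ) (Kinf : ℝ) (hKb : ∀ x, |K x| ≤ Kinf)
    (hsupp : Function.support K ⊆ Set.Icc (-(1/2) : ℝ) (1/2))
    (d : ℕ → ℝ) (D : ℝ) (hD : 0 ≤ D)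
    (hd : ∀ t ∈ Finset.Icc 1 n, |(t : ℝ) / n - u| ≤ b / 2 → |d t| ≤ D) :
    |(n : ℝ)⁻¹ * ∑ t ∈ Finset.Icc 1 n, b⁻¹ * K (((t : ℝ) / n - u) / b) * d t|
      ≤ 2 * Kinf * D := by
  classical
  have hn0 : (0 : ℝ) < n := by exact_mod_cast hn
  have hKinf : 0 ≤ Kinf := le_trans (abs_nonneg _) (hKb 0)
  set p : ℕ → Prop := fun t => |(t : ℝ) / n - u| ≤ b / 2 with hp
  set S : Finset ℕ := (Finset.Icc 1 n).filter p with hS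
  set f : ℕ → ℝ := fun t => b⁻¹ * K (((t : ℝ) / n - u) / b) * d t with hf
  have hsum : ∑ t ∈ Finset.Icc 1 n, f t = ∑ t ∈ S, f t := by
    rw [hS]
    refine (Finset.sum_filter_of_ne ?_).symm
    intro t ht hft
    by_contra hpt
    have hK0 : K (((t : ℝ) / n - u) / b) ≠ 0 := by
      intro h0; apply hft; rw [hf]; simp [h0]
    have hmem := hsupp hK0
    have habs : |((t : ℝ) / n - u) / b| ≤ 1 / 2 := abs_le.mpr ⟨hmem.1, hmem.2⟩
    rw [abs_div, abs_of_pos hb, div_le_div_iff₀ hb (by norm_num : (0:ℝ) < 2)] at habs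
    exact hpt (by linarith)
  -- per term bound on S
  have hterm : ∀ t ∈ S, |f t| ≤ b⁻¹ * Kinf * D := by
    intro t ht
    rw [hS, Finset.mem_filter] at ht
    have hdt : |d t| ≤ D := hd t ht.1 ht.2
    rw [hf]
    calc |b⁻¹ * K (((t : ℝ) / n - u) / b) * d t|
        = b⁻¹ * |K (((t : ℝ) / n - u) / b)| * |d t| := by
          rw [abs_mul, abs_mul, abs_of_pos (inv_pos.mpr hb)]
      _ ≤ b⁻¹ * Kinf * D := by
          apply mul_le_mul (mul_le_mul_of_nonneg_left (hKb _) (le_of_lt (inv_pos.mpr hb)))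
            hdt (abs_nonneg _)
          positivity
  -- cardinality bound
  have hcard : (S.card : ℝ) ≤ 2 * ((n : ℝ) * b) := by
    set a : ℕ := ⌈(n : ℝ) * u - (n : ℝ) * b / 2⌉₊ with ha
    set c : ℕ := ⌊(n : ℝ) * u + (n : ℝ) * b / 2⌋₊ with hc
    have hsub : S ⊆ Finset.Icc a c := by
      intro t ht
      rw [hS, Finset.mem_filter] at ht
      obtain ⟨hl, hr⟩ := abs_le.mp ht.2
      have h1 : (n : ℝ) * u - (n : ℝ) * b / 2 ≤ (t : ℝ) := by
        have : u - b / 2 ≤ (t : ℝ) / n := by linarith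
        have := (le_div_iff₀ hn0).mp this
        nlinarith
      have h2 : (t : ℝ) ≤ (n : ℝ) * u + (n : ℝ) * b / 2 := by
        have : (t : ℝ) / n ≤ u + b / 2 := by linarith
        have := (div_le_iff₀ hn0).mp this
        nlinarith
      rw [Finset.mem_Icc]
      exact ⟨Nat.ceil_le.mpr h1, Nat.le_floor h2⟩
    have h1 : (S.card : ℝ) ≤ ((Finset.Icc a c).card : ℝ) := by
      exact_mod_cast Finset.card_le_card hsub
    rw [Nat.card_Icc] at h1
    by_cases hac : a ≤ c + 1
    · rw [Nat.cast_sub hac] at h1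
      have hcle : (c : ℝ) ≤ (n : ℝ) * u + (n : ℝ) * b / 2 :=
        Nat.floor_le (by positivity)
      have hale : (n : ℝ) * u - (n : ℝ) * b / 2 ≤ (a : ℝ) := Nat.le_ceil _
      push_cast at h1
      nlinarith
    · have h0 : c + 1 - a = 0 := Nat.sub_eq_zero_of_le (le_of_not_ge hac)
      rw [h0] at h1
      norm_num at h1
      have h2 : (0:ℝ) ≤ 2 * ((n : ℝ) * b) := by positivity
      rw [h1]
      simpa using h2
  -- combine
  calc |(n : ℝ)⁻¹ * ∑ t ∈ Finset.Icc 1 n, f t|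
      = (n : ℝ)⁻¹ * |∑ t ∈ S, f t| := by
        rw [hsum, abs_mul, abs_of_pos (inv_pos.mpr hn0)]
    _ ≤ (n : ℝ)⁻¹ * (S.card * (b⁻¹ * Kinf * D)) := by
        apply mul_le_mul_of_nonneg_left _ (le_of_lt (inv_pos.mpr hn0))
        calc |∑ t ∈ S, f t| ≤ ∑ t ∈ S, |f t| := Finset.abs_sum_le_sum_abs _ _
          _ ≤ ∑ _t ∈ S, (b⁻¹ * Kinf * D) := Finset.sum_le_sum hterm
          _ = S.card * (b⁻¹ * Kinf * D) := by rw [Finset.sum_const, nsmul_eq_mul]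
    _ ≤ (n : ℝ)⁻¹ * (2 * ((n : ℝ) * b) * (b⁻¹ * Kinf * D)) := by
        apply mul_le_mul_of_nonneg_left _ (le_of_lt (inv_pos.mpr hn0))
        apply mul_le_mul_of_nonneg_right hcard
        positivity
    _ = 2 * Kinf * D := by
        field_simp

end helpers

/-- **Deterministic bias expansion** (Proposition 3.3, first part): under (S1) with
`q ≥ 1`, `0 < α ≤ 1` and the kernel assumption, uniformly in `u ∈ [0,1]`:
`(1/n)∑ K_b(t/n−u)(E X_{t,n} − E X̃_t(t/n)) = O(n^{−α})` and
`(1/n)∑ K_b(t/n−u)(E X̃_t(t/n) − E X̃_0(u)) = O(b^α) + O(n⁻¹)`. -/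
theorem deterministic_bias {Ω : Type*} [MeasurableSpace Ω] (μ : Measure Ω)
    [IsProbabilityMeasure μ]
    (X : ℕ → ℕ → Ω → ℝ) (Xt : ℝ → ℤ → Ω → ℝ)
    (hXmeas : ∀ n t, Measurable (X n t))
    (hXtmeas : ∀ u t, Measurable (Xt u t))
    (hstat : ∀ u ∈ Icc (0:ℝ) 1, StatErg μ (fun t => Xt u t))
    (q : ℝ) (hq : 1 ≤ q)
    (α : ℝ) (hα : 0 < α) (hα1 : α ≤ 1) (CB : ℝ) (hCB : 0 < CB)
    -- (S1) :
    (hmom : ∃ M : ℝ, ∀ u ∈ Icc (0:ℝ) 1,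
      eLpNorm (Xt u 0) (ENNReal.ofReal q) μ ≤ ENNReal.ofReal M)
    (hhoelder : ∀ u ∈ Icc (0:ℝ) 1, ∀ v ∈ Icc (0:ℝ) 1, ∀ t : ℤ,
      eLpNorm (fun ω => Xt u t ω - Xt v t ω) (ENNReal.ofReal q) μ
        ≤ ENNReal.ofReal (CB * |u - v| ^ α))
    (happrox : ∀ n : ℕ, 1 ≤ n → ∀ t : ℕ, 1 ≤ t → t ≤ n →
      eLpNorm (fun ω => X n t ω - Xt ((t : ℝ) / (n : ℝ)) (t : ℤ) ω) (ENNReal.ofReal q) μ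
        ≤ ENNReal.ofReal (CB * (n : ℝ) ^ (-α)))
    -- kernel :
    (K : ℝ → ℝ) (Kinf BK : ℝ) (hK : KernelAssumption K Kinf BK) :
    ∃ C : ℝ, 0 < C ∧ ∀ n : ℕ, 1 ≤ n → ∀ b : ℝ, b ∈ Ioo (0:ℝ) 1 → 1 ≤ (n : ℝ) * b →
      ∀ u ∈ Icc (0:ℝ) 1,
        |(n : ℝ)⁻¹ * ∑ t ∈ Finset.Icc 1 n, b⁻¹ * K (((t : ℝ) / (n : ℝ) - u) / b)
            * ((∫ ω, X n t ω ∂μ) - ∫ ω, Xt ((t : ℝ) / (n : ℝ)) (t : ℤ) ω ∂μ)|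
          ≤ C * (n : ℝ) ^ (-α) ∧
        |(n : ℝ)⁻¹ * ∑ t ∈ Finset.Icc 1 n, b⁻¹ * K (((t : ℝ) / (n : ℝ) - u) / b)
            * ((∫ ω, Xt ((t : ℝ) / (n : ℝ)) (t : ℤ) ω ∂μ) - ∫ ω, Xt u 0 ω ∂μ)|
          ≤ C * (b ^ α + (n : ℝ)⁻¹) := by
  obtain ⟨M, hM⟩ := hmom
  refine ⟨2 * Kinf * CB, mul_pos (mul_pos two_pos hK.pos) hCB, ?_⟩
  intro n hn b hbmem hnb u hu
  obtain ⟨hb0, hb1⟩ := hbmem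
  obtain ⟨hu0, hu1⟩ := hu
  have hn0 : (0 : ℝ) < n := by exact_mod_cast hn
  -- integrability of the stationary processes at times in [0,1]
  have hmom' : ∀ v ∈ Icc (0:ℝ) 1, ∀ k : ℕ,
      eLpNorm (Xt v (k : ℤ)) (ENNReal.ofReal q) μ ≤ ENNReal.ofReal (max M 0) := by
    intro v hv k
    have := (stationary_transfer (fun t => Xt v t) (hXtmeas v) (hstat v hv) k
      (ENNReal.ofReal q)).2
    calc eLpNorm (Xt v (k : ℤ)) (ENNReal.ofReal q) μ
        = eLpNorm (Xt v 0) (ENNReal.ofReal q) μ := this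
      _ ≤ ENNReal.ofReal M := hM v hv
      _ ≤ ENNReal.ofReal (max M 0) := ENNReal.ofReal_le_ofReal (le_max_left _ _)
  have hXtint : ∀ v ∈ Icc (0:ℝ) 1, ∀ k : ℕ, Integrable (Xt v (k : ℤ)) μ := by
    intro v hv k
    exact integrable_of_Lq (hXtmeas v (k : ℤ)).aestronglyMeasurable hq (hmom' v hv k)
  -- membership facts for t ∈ [1, n]
  have hvmem : ∀ t ∈ Finset.Icc 1 n, (t : ℝ) / n ∈ Icc (0:ℝ) 1 := by
    intro t ht
    rw [Finset.mem_Icc] at ht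
    constructor
    · positivity
    · rw [div_le_one hn0]; exact_mod_cast ht.2
  constructor
  · -- first bound
    have key : ∀ t ∈ Finset.Icc 1 n,
        |(∫ ω, X n t ω ∂μ) - ∫ ω, Xt ((t : ℝ) / n) (t : ℤ) ω ∂μ|
          ≤ CB * (n : ℝ) ^ (-α) := by
      intro t ht
      rw [Finset.mem_Icc] at ht
      have hv := hvmem t (Finset.mem_Icc.mpr ht)
      have hXti : Integrable (Xt ((t : ℝ) / n) (t : ℤ)) μ := hXtint _ hv t
      have hdm : AEStronglyMeasurable
          (fun ω => X n t ω - Xt ((t : ℝ) / n) (t : ℤ) ω) μ :=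
        ((hXmeas n t).sub (hXtmeas _ _)).aestronglyMeasurable
      have hdint : Integrable (fun ω => X n t ω - Xt ((t : ℝ) / n) (t : ℤ) ω) μ :=
        integrable_of_Lq hdm hq (happrox n hn t ht.1 ht.2)
      have hXi : Integrable (X n t) μ := by
        have h3 := hdint.add hXti
        have h4 : X n t = (fun ω => X n t ω - Xt ((t : ℝ) / n) (t : ℤ) ω)
            + Xt ((t : ℝ) / n) (t : ℤ) := by
          funext ω; simp only [Pi.add_apply]; ring
        rw [h4]; exact h3
      rw [← integral_sub hXi hXti]
      exact abs_integral_le_of_Lq hdm hq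
        (by positivity) (happrox n hn t ht.1 ht.2)
    have := sum_kernel_bound n hn hb0 hnb hu0 K Kinf hK.bound hK.supp
      (fun t => (∫ ω, X n t ω ∂μ) - ∫ ω, Xt ((t : ℝ) / n) (t : ℤ) ω ∂μ)
      (CB * (n : ℝ) ^ (-α)) (by positivity) (fun t ht _ => key t ht)
    calc |(n : ℝ)⁻¹ * ∑ t ∈ Finset.Icc 1 n, b⁻¹ * K (((t : ℝ) / n - u) / b)
            * ((∫ ω, X n t ω ∂μ) - ∫ ω, Xt ((t : ℝ) / n) (t : ℤ) ω ∂μ)|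
        ≤ 2 * Kinf * (CB * (n : ℝ) ^ (-α)) := this
      _ = 2 * Kinf * CB * (n : ℝ) ^ (-α) := by ring
  · -- second bound
    have key : ∀ t ∈ Finset.Icc 1 n, |(t : ℝ) / n - u| ≤ b / 2 →
        |(∫ ω, Xt ((t : ℝ) / n) (t : ℤ) ω ∂μ) - ∫ ω, Xt u 0 ω ∂μ|
          ≤ CB * b ^ α := by
      intro t ht hloc
      have hv := hvmem t ht
      have hshift := (stationary_transfer (fun s => Xt ((t : ℝ) / n) s)
        (hXtmeas ((t : ℝ) / n)) (hstat _ hv) t 1).1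
      rw [hshift]
      have hXi0 : Integrable (Xt ((t : ℝ) / n) 0) μ := by
        have := hXtint _ hv 0; simpa using this
      have hXu0 : Integrable (Xt u 0) μ := by
        have := hXtint u ⟨hu0, hu1⟩ 0; simpa using this
      rw [← integral_sub hXi0 hXu0]
      have hdm : AEStronglyMeasurable (fun ω => Xt ((t : ℝ) / n) 0 ω - Xt u 0 ω) μ :=
        ((hXtmeas _ 0).sub (hXtmeas u 0)).aestronglyMeasurable
      have h1 : |(∫ ω, (Xt ((t : ℝ) / n) 0 ω - Xt u 0 ω) ∂μ)|
          ≤ CB * |(t : ℝ) / n - u| ^ α :=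
        abs_integral_le_of_Lq hdm hq (by positivity)
          (hhoelder _ hv u ⟨hu0, hu1⟩ 0)
      refine h1.trans ?_
      apply mul_le_mul_of_nonneg_left _ (le_of_lt hCB)
      apply Real.rpow_le_rpow (abs_nonneg _) _ (le_of_lt hα)
      linarith
    have := sum_kernel_bound n hn hb0 hnb hu0 K Kinf hK.bound hK.supp
      (fun t => (∫ ω, Xt ((t : ℝ) / n) (t : ℤ) ω ∂μ) - ∫ ω, Xt u 0 ω ∂μ)
      (CB * b ^ α) (by positivity) key
    calc |(n : ℝ)⁻¹ * ∑ t ∈ Finset.Icc 1 n, b⁻¹ * K (((t : ℝ) / n - u) / b)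
            * ((∫ ω, Xt ((t : ℝ) / n) (t : ℤ) ω ∂μ) - ∫ ω, Xt u 0 ω ∂μ)|
        ≤ 2 * Kinf * (CB * b ^ α) := this
      _ ≤ 2 * Kinf * CB * (b ^ α + (n : ℝ)⁻¹) := by
          have h1 : (0:ℝ) ≤ (n : ℝ)⁻¹ := by positivity
          have h2 : (0:ℝ) < Kinf := hK.pos
          nlinarith [mul_nonneg (mul_nonneg (mul_nonneg (by norm_num : (0:ℝ) ≤ 2) h2.le)
            hCB.le) h1]
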